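/- Let v₁,…,v_{N+1} be an obtuse system in ℂ^N with pᵢ = 1/(1 + ‖vᵢ‖²). Then Σᵢ pᵢ |vᵢ⟩⟨vᵢ| = I on ℂ^N. -/

import Mathlib

open scoped InnerProductSpace ComplexConjugate

/-- for an obtuse system `v₁,…,v_{N+1}` in `ℂ^N` with
`pᵢ = 1/(1+‖vᵢ‖²)`, one has `∑ i, pᵢ |vᵢ⟩⟨vᵢ| = I`, where `|v⟩⟨v|` is the
rank-one operator `x ↦ ⟨v, x⟩ v`. -/
theorem stmt10 {N : ℕ} (v : Fin (N + 1) → EuclideanSpace ℂ (Fin N))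
    (hv : ∀ i j, i ≠ j → (inner ℂ (v i) (v j) : ℂ) = -1) :
    ∑ i, ((1 / (1 + ‖v i‖ ^ 2) : ℝ) : ℂ) • ((innerSL ℂ (v i)).smulRight (v i)) =
      ContinuousLinearMap.id ℂ (EuclideanSpace ℂ (Fin N)) := by
  classical
  set E := EuclideanSpace ℂ (Fin (N + 1))
  let u : Fin (N + 1) → E := fun i => WithLp.toLp 2 (Fin.snoc (v i) 1 : Fin (N + 1) → ℂ)
  have huinner : ∀ i j, (inner ℂ (u i) (u j) : ℂ) = inner ℂ (v i) (v j) + 1 := by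
    intro i j
    simp [u, E, PiLp.inner_apply, RCLike.inner_apply, Fin.sum_univ_castSucc]
  have hnormu : ∀ i, ‖u i‖ ^ 2 = 1 + ‖v i‖ ^ 2 := by
    intro i
    have h := huinner i i
    rw [inner_self_eq_norm_sq_to_K, inner_self_eq_norm_sq_to_K] at h
    have h4 : ((‖u i‖ : ℝ) : ℂ) ^ 2 = ((‖v i‖ : ℝ) : ℂ) ^ 2 + 1 := h
    have h3 : ‖u i‖ ^ 2 = ‖v i‖ ^ 2 + 1 := by exact_mod_cast h4
    linarith
  have hupos : ∀ i, 0 < ‖u i‖ ^ 2 := fun i => by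
    rw [hnormu]; positivity
  have hune : ∀ i, (‖u i‖ : ℝ) ≠ 0 := fun i => by
    intro h; have := hupos i; rw [h] at this; simp at this
  -- orthonormal family
  let e : Fin (N + 1) → E := fun i => ((‖u i‖⁻¹ : ℝ) : ℂ) • u i
  have he : Orthonormal ℂ e := by
    rw [orthonormal_iff_ite]
    intro i j
    have h1 : (inner ℂ (e i) (e j) : ℂ)
        = ((‖u i‖⁻¹ : ℝ) : ℂ) * ((‖u j‖⁻¹ : ℝ) : ℂ) * inner ℂ (u i) (u j) := by
      simp only [e, inner_smul_left, inner_smul_right, Complex.conj_ofReal]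
      ring
    rw [h1]
    by_cases h : i = j
    · subst h
      simp only [if_pos rfl]
      rw [inner_self_eq_norm_sq_to_K]
      push_cast
      have h0 : ((‖u i‖ : ℝ) : ℂ) ≠ 0 := by exact_mod_cast hune i
      field_simp
      simp
    · rw [huinner, hv i j h, if_neg h]
      ring
  have hcard : Fintype.card (Fin (N + 1)) = Module.finrank ℂ E := by
    simp [E]
  let bb : Module.Basis (Fin (N + 1)) ℂ E := basisOfOrthonormalOfCardEqFinrank he hcard
  have hbb : (bb : Fin (N + 1) → E) = e := coe_basisOfOrthonormalOfCardEqFinrank he hcard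
  let b : OrthonormalBasis (Fin (N + 1)) ℂ E := bb.toOrthonormalBasis (by rwa [hbb])
  have hb : ∀ i, b i = e i := by
    intro i
    rw [show b i = bb i from congrFun (bb.coe_toOrthonormalBasis _) i, ← hbb]
  -- key identity on E
  have key : ∀ x : E, ∑ i, ((1 / ‖u i‖ ^ 2 : ℝ) : ℂ) • ((inner ℂ (u i) x : ℂ) • u i) = x := by
    intro x
    have hrepr := b.sum_repr' x
    calc ∑ i, ((1 / ‖u i‖ ^ 2 : ℝ) : ℂ) • ((inner ℂ (u i) x : ℂ) • u i)
        = ∑ i, (inner ℂ (b i) x : ℂ) • b i := by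
          refine Finset.sum_congr rfl fun i _ => ?_
          rw [hb]
          simp only [e, inner_smul_left, Complex.conj_ofReal, smul_smul]
          congr 1
          push_cast
          have := hune i
          field_simp
      _ = x := hrepr
  -- componentwise main identity
  have hmain : ∀ x : EuclideanSpace ℂ (Fin N),
      ∑ i, ((1 / (1 + ‖v i‖ ^ 2) : ℝ) : ℂ) • ((inner ℂ (v i) x : ℂ) • v i) = x := by
    intro x
    have hx := key (WithLp.toLp 2 (Fin.snoc x 0 : Fin (N + 1) → ℂ) : E)
    have hinner : ∀ i, (inner ℂ (u i) (WithLp.toLp 2 (Fin.snoc x 0 : Fin (N + 1) → ℂ) : E) : ℂ)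
        = inner ℂ (v i) x := by
      intro i
      simp [u, E, PiLp.inner_apply, RCLike.inner_apply, Fin.sum_univ_castSucc]
    ext k
    have h2 := congrArg (fun y : E => y (Fin.castSucc k)) hx
    have hL : (∑ i, ((1 / (1 + ‖v i‖ ^ 2) : ℝ) : ℂ) • ((inner ℂ (v i) x : ℂ) • v i)) k
        = ∑ i, (((1 / (1 + ‖v i‖ ^ 2) : ℝ) : ℂ) * ((inner ℂ (v i) x : ℂ) * v i k)) :=
      by simp only [WithLp.ofLp_sum, WithLp.ofLp_smul, Finset.sum_apply, Pi.smul_apply, smul_eq_mul]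
    have hR : ((∑ i, ((1 / ‖u i‖ ^ 2 : ℝ) : ℂ) • ((inner ℂ (u i) (WithLp.toLp 2 (Fin.snoc x 0 : Fin (N + 1) → ℂ) : E) : ℂ) • u i) : E) : Fin (N + 1) → ℂ) (Fin.castSucc k)
        = ∑ i, (((1 / ‖u i‖ ^ 2 : ℝ) : ℂ) * ((inner ℂ (u i) (WithLp.toLp 2 (Fin.snoc x 0 : Fin (N + 1) → ℂ) : E) : ℂ) * (u i : Fin (N + 1) → ℂ) (Fin.castSucc k))) :=
      by simp only [E, WithLp.ofLp_sum, WithLp.ofLp_smul, Finset.sum_apply, Pi.smul_apply, smul_eq_mul]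
    rw [hR] at h2
    rw [hL, show x k = (WithLp.toLp 2 (Fin.snoc x 0 : Fin (N + 1) → ℂ) : E) (Fin.castSucc k) by simp, ← h2]
    refine Finset.sum_congr rfl fun i _ => ?_
    rw [hinner i, hnormu i]
    have hu : (u i : Fin (N + 1) → ℂ) (Fin.castSucc k) = v i k := by simp [u]
    rw [hu]
  refine ContinuousLinearMap.ext fun x => ?_
  simp only [ContinuousLinearMap.sum_apply, ContinuousLinearMap.smul_apply,
    ContinuousLinearMap.smulRight_apply, innerSL_apply_apply, ContinuousLinearMap.id_apply]
  exact hmain x
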